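/- Let F be a field, n ≥ 1, and f ∈ F[x_1,…,x_n] a nonzero polynomial of total degree d. Then for any finite subset S ⊆ F, ∑_{p ∈ S^n} mult(f, p) ≤ d · |S|^{n−1}. -/

import Mathlib

open MvPolynomial

section Defs

variable {F : Type*} [Field F]

/-- A polynomial in the block variables `x_{i,j}` (`i ∈ Fin d`, `j ∈ Fin n`) is
multilinear exactly in the blocks of `S`: every monomial has degree 1 in each block
`i ∈ S` and degree 0 in each block `i ∉ S`. -/
def IsMultilinearOn {d n : ℕ} (S : Finset (Fin d))
    (f : MvPolynomial (Fin d × Fin n) F) : Prop :=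
  ∀ m ∈ f.support, ∀ i : Fin d,
    (∑ j : Fin n, m (i, j)) = if i ∈ S then 1 else 0

/-- A multilinear form: degree 1 in every block of variables. -/
def IsMultilinear {d n : ℕ} (f : MvPolynomial (Fin d × Fin n) F) : Prop :=
  IsMultilinearOn Finset.univ f

/-- Commutative rank: the rank of the matrix over the field of fractions of the
polynomial ring. -/
noncomputable def CR {σ : Type*} {α β : Type*} [Fintype β]
    (M : Matrix α β (MvPolynomial σ F)) : ℕ :=
  (M.map (algebraMap (MvPolynomial σ F) (FractionRing (MvPolynomial σ F)))).rank

/-- `M` is the sum of `r` outer products `u ⊗ v`, where `u` has entries multilinear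
in the blocks of some `S ⊆ [d]` and `v` has entries multilinear in the complementary
blocks. -/
def HasPRDecomp {d n a b : ℕ}
    (M : Matrix (Fin a) (Fin b) (MvPolynomial (Fin d × Fin n) F)) (r : ℕ) : Prop :=
  ∃ (S : Fin r → Finset (Fin d))
    (u : Fin r → Fin a → MvPolynomial (Fin d × Fin n) F)
    (v : Fin r → Fin b → MvPolynomial (Fin d × Fin n) F),
    (∀ t i, IsMultilinearOn (S t) (u t i)) ∧
    (∀ t j, IsMultilinearOn (S t)ᶜ (v t j)) ∧
    M = ∑ t, Matrix.of fun i j => u t i * v t j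

/-- Partition rank of a matrix of multilinear forms. -/
noncomputable def PR {d n a b : ℕ}
    (M : Matrix (Fin a) (Fin b) (MvPolynomial (Fin d × Fin n) F)) : ℕ :=
  sInf {r | HasPRDecomp M r}

/-- Evaluation of a matrix of multilinear forms at a point `p ∈ (F^n)^d`. -/
noncomputable def evalMat {d n : ℕ} {α β : Type*}
    (M : Matrix α β (MvPolynomial (Fin d × Fin n) F)) (p : Fin d → Fin n → F) :
    Matrix α β F :=
  M.map (eval fun v => p v.1 v.2)

/-- Max-rank: the largest rank of a scalar evaluation. -/
noncomputable def MaxR {d n : ℕ} {α β : Type*} [Fintype β]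
    (M : Matrix α β (MvPolynomial (Fin d × Fin n) F)) : ℕ :=
  ⨆ p : Fin d → Fin n → F, (evalMat M p).rank

/-- Partial evaluation: substitute `x_i := p_i` for `i ∈ S`, leaving the other
blocks of variables untouched. -/
noncomputable def pevalMat {d n : ℕ} {α β : Type*}
    (M : Matrix α β (MvPolynomial (Fin d × Fin n) F)) (S : Finset (Fin d))
    (p : Fin d → Fin n → F) :
    Matrix α β (MvPolynomial (Fin d × Fin n) F) :=
  M.map (aeval fun v : Fin d × Fin n => if v.1 ∈ S then C (p v.1 v.2) else X v)

end Defs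

section D1

variable {F : Type*} [Field F]

/-- Partition-rank decomposition for matrices of linear forms: a sum of `r` outer
products, each either (scalars) ⊗ (linear forms) or (linear forms) ⊗ (scalars). -/
def HasPR1Decomp {n a b : ℕ}
    (M : Matrix (Fin a) (Fin b) (MvPolynomial (Fin n) F)) (r : ℕ) : Prop :=
  ∃ (c : Fin r → Bool)
    (u : Fin r → Fin a → MvPolynomial (Fin n) F)
    (v : Fin r → Fin b → MvPolynomial (Fin n) F),
    (∀ t i, (u t i).IsHomogeneous (if c t then 0 else 1)) ∧
    (∀ t j, (v t j).IsHomogeneous (if c t then 1 else 0)) ∧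
    M = ∑ t, Matrix.of fun i j => u t i * v t j

/-- Partition rank of a matrix of linear forms. -/
noncomputable def PR1 {n a b : ℕ}
    (M : Matrix (Fin a) (Fin b) (MvPolynomial (Fin n) F)) : ℕ :=
  sInf {r | HasPR1Decomp M r}

/-- Max-rank of a matrix of linear forms. -/
noncomputable def MaxR1 {n a b : ℕ}
    (M : Matrix (Fin a) (Fin b) (MvPolynomial (Fin n) F)) : ℕ :=
  ⨆ p : Fin n → F, (M.map (eval p)).rank

end D1

section Tensor3

variable {F : Type*} [Field F]

/-- Substitute the first two blocks of variables of a trilinear form at `x` and `y`,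
leaving a polynomial in the third block. -/
noncomputable def sub01 {n : ℕ} (T : MvPolynomial (Fin 3 × Fin n) F)
    (x y : Fin n → F) : MvPolynomial (Fin 3 × Fin n) F :=
  aeval (fun v : Fin 3 × Fin n =>
    if v.1 = 0 then C (x v.2) else if v.1 = 1 then C (y v.2) else X v) T

open Classical in
/-- The bias of a 3-tensor: the probability over `(x, y)` that `T(x, y, -)` is the
zero linear form. -/
noncomputable def bias {n : ℕ} [Fintype F] (T : MvPolynomial (Fin 3 × Fin n) F) : ℝ :=
  ((Finset.univ.filter fun p : (Fin n → F) × (Fin n → F) =>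
      sub01 T p.1 p.2 = 0).card : ℝ) /
    ((Fintype.card ((Fin n → F) × (Fin n → F))) : ℝ)

/-- The analytic rank of a 3-tensor. -/
noncomputable def AR {n : ℕ} [Fintype F] (T : MvPolynomial (Fin 3 × Fin n) F) : ℝ :=
  - Real.logb (Fintype.card F) (bias T)

/-- A slice-rank decomposition: `T = ∑ f_t g_t` with `f_t` a linear form in one
block and `g_t` a bilinear form in the other two blocks. -/
def HasSRDecomp {n : ℕ} (T : MvPolynomial (Fin 3 × Fin n) F) (r : ℕ) : Prop :=
  ∃ (c : Fin r → Fin 3) (f g : Fin r → MvPolynomial (Fin 3 × Fin n) F),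
    (∀ t, IsMultilinearOn {c t} (f t)) ∧
    (∀ t, IsMultilinearOn ({c t} : Finset (Fin 3))ᶜ (g t)) ∧
    T = ∑ t, f t * g t

/-- Slice rank of a 3-tensor. -/
noncomputable def SR {n : ℕ} (T : MvPolynomial (Fin 3 × Fin n) F) : ℕ :=
  sInf {r | HasSRDecomp T r}

/-- The matrix `mat T` of a 3-tensor, evaluated at `x` in its first block:
the `(j,k)` entry is `T(x, e_j, e_k)`. -/
noncomputable def matT {n : ℕ} (T : MvPolynomial (Fin 3 × Fin n) F)
    (x : Fin n → F) : Matrix (Fin n) (Fin n) F :=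
  Matrix.of fun j k => eval (fun v : Fin 3 × Fin n =>
    if v.1 = 0 then x v.2
    else if v.1 = 1 then (if v.2 = j then 1 else 0)
    else (if v.2 = k then 1 else 0)) T

end Tensor3

section Mult

variable {F : Type*} [Field F]

/-- `mult(f, p)`: the minimum total degree of a monomial of `f(x + p)`. -/
noncomputable def polyMult {n : ℕ} (f : MvPolynomial (Fin n) F) (p : Fin n → F) : ℕ :=
  sInf {k | ∃ m ∈ (aeval (fun i : Fin n => X i + C (p i)) f :
    MvPolynomial (Fin n) F).support, (∑ i, m i) = k}

end Mult
section SZAux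

variable {F : Type*} [Field F]

/-- Minimal total degree of a monomial of `g` (0 if `g = 0`). -/
noncomputable def mord {k : ℕ} (g : MvPolynomial (Fin k) F) : ℕ :=
  sInf {j | ∃ m ∈ g.support, (∑ i, m i) = j}

/-- The shift `x ↦ x + p` as an algebra homomorphism. -/
noncomputable def shiftHom {k : ℕ} (p : Fin k → F) :
    MvPolynomial (Fin k) F →ₐ[F] MvPolynomial (Fin k) F :=
  aeval (fun i => X i + C (p i))

lemma polyMult_eq_mord {n : ℕ} (f : MvPolynomial (Fin n) F) (p : Fin n → F) :
    polyMult f p = mord (shiftHom p f) := rfl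

lemma mord_le {k : ℕ} {g : MvPolynomial (Fin k) F} {m : Fin k →₀ ℕ} (hm : m ∈ g.support) :
    mord g ≤ ∑ i, m i := Nat.sInf_le ⟨m, hm, rfl⟩

lemma exists_mord {k : ℕ} {g : MvPolynomial (Fin k) F} (hg : g ≠ 0) :
    ∃ m ∈ g.support, (∑ i, m i) = mord g := by
  have hne : {j | ∃ m ∈ g.support, (∑ i, m i) = j}.Nonempty := by
    obtain ⟨m, hm⟩ := MvPolynomial.support_nonempty.2 hg
    exact ⟨_, m, hm, rfl⟩
  exact Nat.sInf_mem hne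

lemma shiftHom_comp_apply {k : ℕ} (p q : Fin k → F) (f : MvPolynomial (Fin k) F) :
    shiftHom p (shiftHom q f) = shiftHom (fun i => p i + q i) f := by
  have : (shiftHom p).comp (shiftHom q) = shiftHom (fun i => p i + q i) := by
    apply MvPolynomial.algHom_ext
    intro i
    simp [shiftHom, map_add, add_assoc]
  exact congrFun (congrArg DFunLike.coe this) f

lemma shiftHom_ne_zero {k : ℕ} (p : Fin k → F) {f : MvPolynomial (Fin k) F} (hf : f ≠ 0) :
    shiftHom p f ≠ 0 := by
  intro h0
  apply hf
  have h1 : shiftHom (fun i => -p i) (shiftHom p f) = f := by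
    rw [shiftHom_comp_apply]
    have : (fun i => -p i + p i) = fun _ : Fin k => (0 : F) := by funext i; simp
    rw [this]
    simp only [shiftHom, map_zero, add_zero]
    exact aeval_X_left_apply f
  rw [h0, map_zero] at h1
  exact h1.symm

lemma mord_zero_of_fin0 (g : MvPolynomial (Fin 0) F) (hg : g ≠ 0) : mord g = 0 := by
  obtain ⟨m, hm, hs⟩ := exists_mord hg
  rw [← hs]
  simp

open Polynomial in
/-- Sum over `S` of the order of vanishing (for a nonzero univariate polynomial)
is bounded by the degree. -/
lemma sum_natTrailingDegree_taylor_le {h : F[X]} (hh : h ≠ 0) (S : Finset F) :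
    ∑ b ∈ S, ((taylor b) h).natTrailingDegree ≤ h.natDegree := by
  classical
  have key : ∀ b : F, ((taylor b) h).natTrailingDegree ≤ rootMultiplicity b h := by
    intro b
    have htb : (taylor b) h ≠ 0 := fun hz => hh
      (taylor_injective b (by rw [hz, map_zero]))
    set ν := ((taylor b) h).natTrailingDegree with hν
    have hdvd : Polynomial.X ^ ν ∣ (taylor b) h :=
      X_pow_dvd_iff.2 fun d hd => coeff_eq_zero_of_lt_natTrailingDegree hd
    obtain ⟨g, hg⟩ := hdvd
    have hXpow : (taylor (-b)) (Polynomial.X ^ ν * g)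
        = (Polynomial.X - Polynomial.C b) ^ ν * (taylor (-b)) g := by
      rw [taylor_mul]
      congr 1
      rw [taylor_apply, Polynomial.pow_comp, Polynomial.X_comp, map_neg, ← sub_eq_add_neg]
    have hdvd2 : (Polynomial.X - Polynomial.C b) ^ ν ∣ h :=
      ⟨(taylor (-b)) g, by
        rw [← hXpow, ← hg, taylor_taylor, neg_add_cancel, taylor_zero]⟩
    exact (le_rootMultiplicity_iff hh).2 hdvd2
  calc ∑ b ∈ S, ((taylor b) h).natTrailingDegree
      ≤ ∑ b ∈ S, rootMultiplicity b h := Finset.sum_le_sum fun b _ => key b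
    _ = ∑ b ∈ S, h.roots.count b := by
        refine Finset.sum_congr rfl fun b _ => ?_
        rw [count_roots]
    _ ≤ Multiset.card h.roots := by
        classical
        rw [← Multiset.toFinset_sum_count_eq h.roots]
        rw [← Finset.sum_filter_add_sum_filter_not S (fun b => b ∈ h.roots.toFinset)]
        have h1 : ∑ b ∈ S.filter (fun b => ¬ b ∈ h.roots.toFinset), h.roots.count b = 0 := by
          refine Finset.sum_eq_zero fun b hb => ?_
          rw [Finset.mem_filter] at hb
          simp only [Multiset.mem_toFinset] at hb
          exact Multiset.count_eq_zero_of_notMem hb.2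
        rw [h1, add_zero]
        exact Finset.sum_le_sum_of_subset (fun b hb => by
          rw [Finset.mem_filter] at hb; exact hb.2)
    _ ≤ h.natDegree := card_roots' h

open Polynomial in
/-- Extracting the `α` coefficient blockwise: from `R[X]` with `R = MvPolynomial (Fin k) F`
down to `F[X]`. -/
noncomputable def phiC {k : ℕ} (α : Fin k →₀ ℕ) (q : Polynomial (MvPolynomial (Fin k) F)) :
    F[X] :=
  ⟨⟨q.toFinsupp.coeff.mapRange (MvPolynomial.coeff α) (MvPolynomial.coeff_zero α)⟩⟩

open Polynomial in
lemma coeff_phiC {k : ℕ} (α : Fin k →₀ ℕ) (q : Polynomial (MvPolynomial (Fin k) F)) (i : ℕ) :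
    (phiC α q).coeff i = (q.coeff i).coeff α := by
  rcases q with ⟨q⟩
  simp [phiC, coeff_ofFinsupp, Finsupp.mapRange_apply, Polynomial.coeff]

open Polynomial in
lemma phiC_add {k : ℕ} (α : Fin k →₀ ℕ) (q₁ q₂ : Polynomial (MvPolynomial (Fin k) F)) :
    phiC α (q₁ + q₂) = phiC α q₁ + phiC α q₂ := by
  ext i
  simp [coeff_phiC, MvPolynomial.coeff_add]

open Polynomial in
lemma phiC_C_mul_map {k : ℕ} (α : Fin k →₀ ℕ) (c : MvPolynomial (Fin k) F) (w : F[X]) :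
    phiC α (Polynomial.C c * w.map (MvPolynomial.C : F →+* MvPolynomial (Fin k) F))
      = MvPolynomial.coeff α c • w := by
  ext i
  rw [coeff_phiC]
  simp only [Polynomial.coeff_C_mul, Polynomial.coeff_map, Polynomial.coeff_smul,
    smul_eq_mul]
  rw [mul_comm c (MvPolynomial.C (w.coeff i)), MvPolynomial.coeff_C_mul, mul_comm]

open Polynomial in
lemma phiC_aeval {k : ℕ} (α : Fin k →₀ ℕ) (b : F)
    (q : Polynomial (MvPolynomial (Fin k) F)) :
    phiC α (Polynomial.aeval (Polynomial.X + Polynomial.C (MvPolynomial.C b)) q)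
      = (taylor b) (phiC α q) := by
  induction q using Polynomial.induction_on' with
  | add p q hp hq => rw [map_add, phiC_add, hp, hq, phiC_add, map_add]
  | monomial j c =>
    have h1 : (Polynomial.aeval (Polynomial.X + Polynomial.C (MvPolynomial.C b)))
        ((Polynomial.monomial j) c)
        = Polynomial.C c * (((Polynomial.X + Polynomial.C b : F[X])) ^ j).map
            (MvPolynomial.C : F →+* MvPolynomial (Fin k) F) := by
      rw [Polynomial.aeval_monomial, Polynomial.map_pow, Polynomial.map_add,
        Polynomial.map_X, Polynomial.map_C, Polynomial.algebraMap_eq]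
    have h2 : ((Polynomial.monomial j) c : Polynomial (MvPolynomial (Fin k) F))
        = Polynomial.C c * ((Polynomial.X ^ j : F[X])).map
            (MvPolynomial.C : F →+* MvPolynomial (Fin k) F) := by
      rw [Polynomial.map_pow, Polynomial.map_X, ← Polynomial.C_mul_X_pow_eq_monomial]
    rw [h1, h2, phiC_C_mul_map, phiC_C_mul_map, map_smul]
    congr 1
    rw [taylor_apply, Polynomial.pow_comp, Polynomial.X_comp]

open Polynomial in
lemma finSuccEquiv_shift_tail {n : ℕ} (a : Fin n → F) (f : MvPolynomial (Fin (n + 1)) F) :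
    MvPolynomial.finSuccEquiv F n (shiftHom (Fin.cons 0 a) f)
      = ((MvPolynomial.finSuccEquiv F n f).map (shiftHom a : MvPolynomial (Fin n) F →+* MvPolynomial (Fin n) F)) := by
  have key : (MvPolynomial.finSuccEquiv F n).toAlgHom.comp (shiftHom (Fin.cons 0 a))
      = (Polynomial.mapAlgHom (shiftHom a)).comp (MvPolynomial.finSuccEquiv F n).toAlgHom := by
    apply MvPolynomial.algHom_ext
    intro i
    refine Fin.cases ?_ (fun j => ?_) i
    · simp only [AlgHom.coe_comp, AlgEquiv.coe_toAlgHom, AlgHom.coe_coe, Function.comp_apply,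
        shiftHom, MvPolynomial.aeval_X, Fin.cons_zero, map_zero, add_zero,
        MvPolynomial.finSuccEquiv_X_zero, Polynomial.coe_mapAlgHom, Polynomial.map_X]
    · simp only [AlgHom.coe_comp, AlgEquiv.coe_toAlgHom, AlgHom.coe_coe, Function.comp_apply,
        shiftHom, MvPolynomial.aeval_X, map_add, MvPolynomial.finSuccEquiv_X_succ, Fin.cons_succ,
        Polynomial.coe_mapAlgHom, Polynomial.map_C]
      have hC : (MvPolynomial.finSuccEquiv F n) (MvPolynomial.C (a j) : MvPolynomial (Fin (n+1)) F)
          = Polynomial.C (MvPolynomial.C (a j)) := by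
        simp [MvPolynomial.finSuccEquiv_apply]
      rw [hC, ← Polynomial.C_add]
      congr 1
      simp [shiftHom]
  exact congrFun (congrArg DFunLike.coe key) f

open Polynomial in
lemma finSuccEquiv_shift_head {n : ℕ} (b : F) (f : MvPolynomial (Fin (n + 1)) F) :
    MvPolynomial.finSuccEquiv F n (shiftHom (Fin.cons b 0) f)
      = Polynomial.aeval (Polynomial.X + Polynomial.C (MvPolynomial.C b))
          (MvPolynomial.finSuccEquiv F n f) := by
  have key : (MvPolynomial.finSuccEquiv F n).toAlgHom.comp (shiftHom (Fin.cons b 0))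
      = ((Polynomial.aeval (Polynomial.X + Polynomial.C (MvPolynomial.C b))).restrictScalars F).comp
          (MvPolynomial.finSuccEquiv F n).toAlgHom := by
    apply MvPolynomial.algHom_ext
    intro i
    refine Fin.cases ?_ (fun j => ?_) i
    · simp only [AlgHom.coe_comp, AlgEquiv.coe_toAlgHom, AlgHom.coe_coe, Function.comp_apply,
        shiftHom, MvPolynomial.aeval_X, map_add, Fin.cons_zero, MvPolynomial.finSuccEquiv_X_zero,
        AlgHom.restrictScalars_apply, Polynomial.aeval_X]
      have hC : (MvPolynomial.finSuccEquiv F n) (MvPolynomial.C b : MvPolynomial (Fin (n+1)) F)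
          = Polynomial.C (MvPolynomial.C b) := by
        simp [MvPolynomial.finSuccEquiv_apply]
      rw [hC]
    · simp only [AlgHom.coe_comp, AlgEquiv.coe_toAlgHom, AlgHom.coe_coe, Function.comp_apply,
        shiftHom, MvPolynomial.aeval_X, Fin.cons_succ, Pi.zero_apply, map_zero, add_zero,
        MvPolynomial.finSuccEquiv_X_succ, AlgHom.restrictScalars_apply, Polynomial.aeval_C]
      rw [Polynomial.algebraMap_eq]
  exact congrFun (congrArg DFunLike.coe key) f

open Polynomial in
lemma key_point {n : ℕ} (f : MvPolynomial (Fin (n + 1)) F) (hf : f ≠ 0) (a : Fin n → F) :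
    ∃ h : F[X], h ≠ 0 ∧ h.natDegree ≤ (MvPolynomial.finSuccEquiv F n f).natDegree ∧
      ∀ b : F, polyMult f (Fin.cons b a)
        ≤ polyMult ((MvPolynomial.finSuccEquiv F n f).leadingCoeff) a
            + ((taylor b) h).natTrailingDegree := by
  have hQ0' : MvPolynomial.finSuccEquiv F n f ≠ 0 := fun hz => hf (by
    have := congrArg (MvPolynomial.finSuccEquiv F n).symm hz
    simpa using this)
  set Q := MvPolynomial.finSuccEquiv F n f with hQ
  have hQ0 : Q ≠ 0 := hQ0'
  set t := Q.natDegree with ht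
  have hFt : Q.leadingCoeff ≠ 0 := Polynomial.leadingCoeff_ne_zero.2 hQ0
  have hg : shiftHom a Q.leadingCoeff ≠ 0 := shiftHom_ne_zero a hFt
  obtain ⟨α, hα, hαsum⟩ := exists_mord hg
  set q := MvPolynomial.finSuccEquiv F n (shiftHom (Fin.cons 0 a) f) with hq
  have hqc : ∀ j, q.coeff j = shiftHom a (Q.coeff j) := by
    intro j
    rw [hq, finSuccEquiv_shift_tail, Polynomial.coeff_map, hQ]
    rfl
  refine ⟨phiC α q, ?_, ?_, ?_⟩
  · intro hz
    have : (phiC α q).coeff t = 0 := by rw [hz]; simp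
    rw [coeff_phiC, hqc t] at this
    rw [MvPolynomial.mem_support_iff] at hα
    exact hα this
  · rw [Polynomial.natDegree_le_iff_coeff_eq_zero]
    intro N hN
    rw [coeff_phiC, hqc N, Polynomial.coeff_eq_zero_of_natDegree_lt hN, map_zero]
    simp
  · intro b
    set ν := ((taylor b) (phiC α q)).natTrailingDegree with hν
    have hcons : (fun i => Fin.cons b (0 : Fin n → F) i + Fin.cons 0 a i) = Fin.cons b a := by
      funext i
      refine Fin.cases ?_ (fun j => ?_) i <;> simp
    have hw : shiftHom (Fin.cons b a) f = shiftHom (Fin.cons b 0) (shiftHom (Fin.cons 0 a) f) := by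
      rw [shiftHom_comp_apply, hcons]
    have htay : (taylor b) (phiC α q) = phiC α (MvPolynomial.finSuccEquiv F n (shiftHom (Fin.cons b a) f)) := by
      rw [hw, finSuccEquiv_shift_head, phiC_aeval]
    have htb0 : (taylor b) (phiC α q) ≠ 0 := by
      intro hz
      have hz2 : phiC α q = 0 := taylor_injective b (by rw [hz, map_zero])
      have : (phiC α q).coeff t = 0 := by rw [hz2]; simp
      rw [coeff_phiC, hqc t] at this
      rw [MvPolynomial.mem_support_iff] at hα
      exact hα this
    have hcoeff : MvPolynomial.coeff (Finsupp.cons ν α) (shiftHom (Fin.cons b a) f) ≠ 0 := by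
      rw [← MvPolynomial.finSuccEquiv_coeff_coeff, ← coeff_phiC, ← htay]
      exact Polynomial.coeff_natTrailingDegree_ne_zero.2 htb0
    have hmem : Finsupp.cons ν α ∈ (shiftHom (Fin.cons b a) f).support :=
      MvPolynomial.mem_support_iff.2 hcoeff
    have hle := mord_le hmem
    have hsum : (∑ i, (Finsupp.cons ν α) i) = ν + ∑ i, α i := by
      simp [Fin.sum_univ_succ]
    rw [polyMult_eq_mord, polyMult_eq_mord]
    rw [hsum] at hle
    rw [← hαsum]
    omega

open Polynomial in
lemma key_row {n : ℕ} (f : MvPolynomial (Fin (n + 1)) F) (hf : f ≠ 0) (a : Fin n → F)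
    (S : Finset F) :
    ∑ b ∈ S, polyMult f (Fin.cons b a)
      ≤ S.card * polyMult ((MvPolynomial.finSuccEquiv F n f).leadingCoeff) a
          + (MvPolynomial.finSuccEquiv F n f).natDegree := by
  obtain ⟨h, h0, hdeg, hb⟩ := key_point f hf a
  calc ∑ b ∈ S, polyMult f (Fin.cons b a)
      ≤ ∑ b ∈ S, (polyMult ((MvPolynomial.finSuccEquiv F n f).leadingCoeff) a
          + ((taylor b) h).natTrailingDegree) := Finset.sum_le_sum fun b _ => hb b
    _ = S.card * polyMult ((MvPolynomial.finSuccEquiv F n f).leadingCoeff) a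
          + ∑ b ∈ S, ((taylor b) h).natTrailingDegree := by
        rw [Finset.sum_add_distrib, Finset.sum_const, smul_eq_mul]
    _ ≤ _ := by
        have := sum_natTrailingDegree_taylor_le h0 S
        omega

lemma sum_piFinset_succ {n : ℕ} (S : Finset F) (g : (Fin (n + 1) → F) → ℕ) :
    ∑ p ∈ Fintype.piFinset (fun _ : Fin (n + 1) => S), g p
      = ∑ a ∈ Fintype.piFinset (fun _ : Fin n => S), ∑ b ∈ S, g (Fin.cons b a) := by
  rw [← Finset.sum_product']
  refine Finset.sum_nbij' (fun p => (Fin.tail p, p 0)) (fun x => Fin.cons x.2 x.1)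
    ?_ ?_ ?_ ?_ ?_
  · intro p hp
    rw [Fintype.mem_piFinset] at hp
    rw [Finset.mem_product]
    exact ⟨Fintype.mem_piFinset.2 fun i => hp _, hp 0⟩
  · intro x hx
    rw [Finset.mem_product] at hx
    rw [Fintype.mem_piFinset]
    intro i
    refine Fin.cases ?_ (fun j => ?_) i
    · simpa using hx.2
    · simpa using Fintype.mem_piFinset.1 hx.1 j
  · intro p _
    exact Fin.cons_self_tail p
  · intro x _
    simp [Fin.tail_cons]
  · intro p _
    rw [Fin.cons_self_tail]

lemma mult_sz_main : ∀ (n : ℕ) (f : MvPolynomial (Fin n) F), f ≠ 0 →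
    ∀ (d : ℕ), f.totalDegree ≤ d → ∀ S : Finset F,
    ∑ p ∈ Fintype.piFinset (fun _ : Fin n => S), polyMult f p ≤ d * S.card ^ (n - 1)
  | 0, f, hf, d, hd, S => by
    have : ∀ p ∈ Fintype.piFinset (fun _ : Fin 0 => S), polyMult f p = 0 := by
      intro p _
      rw [polyMult_eq_mord]
      exact mord_zero_of_fin0 _ (shiftHom_ne_zero p hf)
    rw [Finset.sum_eq_zero this]
    exact Nat.zero_le _
  | (n + 1), f, hf, d, hd, S => by
    have hQ0' : MvPolynomial.finSuccEquiv F n f ≠ 0 := fun hz => hf (by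
      have := congrArg (MvPolynomial.finSuccEquiv F n).symm hz
      simpa using this)
    set Q := MvPolynomial.finSuccEquiv F n f with hQ
    have hQ0 : Q ≠ 0 := hQ0'
    set t := Q.natDegree with ht
    have hFt : Q.leadingCoeff ≠ 0 := Polynomial.leadingCoeff_ne_zero.2 hQ0
    have htot : Q.leadingCoeff.totalDegree + t ≤ d := by
      refine le_trans ?_ hd
      have := MvPolynomial.totalDegree_coeff_finSuccEquiv_add_le f t
        (by rw [← hQ]; exact hFt)
      rw [← hQ] at this
      exact this
    have IH := mult_sz_main n Q.leadingCoeff hFt Q.leadingCoeff.totalDegree le_rfl S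
    have step1 : ∑ p ∈ Fintype.piFinset (fun _ : Fin (n + 1) => S), polyMult f p
        ≤ ∑ a ∈ Fintype.piFinset (fun _ : Fin n => S),
            (S.card * polyMult Q.leadingCoeff a + t) := by
      rw [sum_piFinset_succ]
      exact Finset.sum_le_sum fun a _ => key_row f hf a S
    have step2 : ∑ a ∈ Fintype.piFinset (fun _ : Fin n => S),
        (S.card * polyMult Q.leadingCoeff a + t)
        = S.card * (∑ a ∈ Fintype.piFinset (fun _ : Fin n => S), polyMult Q.leadingCoeff a)
            + t * S.card ^ n := by
      rw [Finset.sum_add_distrib, Finset.sum_const, smul_eq_mul,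
        Fintype.card_piFinset_const, ← Finset.mul_sum]
      ring
    rcases Nat.eq_zero_or_pos n with hn0 | hnpos
    · subst hn0
      have hzero : ∑ a ∈ Fintype.piFinset (fun _ : Fin 0 => S), polyMult Q.leadingCoeff a = 0 := by
        refine Finset.sum_eq_zero fun a _ => ?_
        rw [polyMult_eq_mord]
        exact mord_zero_of_fin0 _ (shiftHom_ne_zero a hFt)
      rw [step2, hzero] at step1
      simp at step1 ⊢
      omega
    · have hfinal : S.card * (Q.leadingCoeff.totalDegree * S.card ^ (n - 1)) + t * S.card ^ n
          ≤ d * S.card ^ n := by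
        have hpow : S.card * S.card ^ (n - 1) = S.card ^ n := by
          rw [← pow_succ']
          congr 1
          omega
        calc S.card * (Q.leadingCoeff.totalDegree * S.card ^ (n - 1)) + t * S.card ^ n
            = Q.leadingCoeff.totalDegree * (S.card * S.card ^ (n - 1)) + t * S.card ^ n := by ring
          _ = Q.leadingCoeff.totalDegree * S.card ^ n + t * S.card ^ n := by rw [hpow]
          _ = (Q.leadingCoeff.totalDegree + t) * S.card ^ n := by ring
          _ ≤ d * S.card ^ n := Nat.mul_le_mul_right _ htot
      have : S.card * (∑ a ∈ Fintype.piFinset (fun _ : Fin n => S), polyMult Q.leadingCoeff a)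
            + t * S.card ^ n
          ≤ S.card * (Q.leadingCoeff.totalDegree * S.card ^ (n - 1)) + t * S.card ^ n :=
        Nat.add_le_add_right (Nat.mul_le_mul_left _ IH) _
      rw [step2] at step1
      simpa using le_trans step1 (le_trans this hfinal)

end SZAux

/-- Multiplicity Schwartz–Zippel: if `f ≠ 0` has total degree `d`,
then `∑_{p ∈ S^n} mult(f, p) ≤ d · |S|^{n−1}`. -/
theorem statement_7 (F : Type*) [Field F] [DecidableEq F] (n : ℕ) (hn : 1 ≤ n)
    (f : MvPolynomial (Fin n) F) (hf : f ≠ 0) (d : ℕ) (hd : f.totalDegree = d)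
    (S : Finset F) :
    ∑ p ∈ Fintype.piFinset (fun _ : Fin n => S), polyMult f p ≤
      d * S.card ^ (n - 1) := by
  exact mult_sz_main n f hf d hd.le S
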